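/- Let Ψ(x, y) denote the number of positive integers n ≤ x all of whose prime factors are ≤ y. If y = exp(log x / log log x), then for every constant A > 0 one has Ψ(x, y) = O(x/(log x)^A) as x → ∞. -/

import Mathlib

open Filter Finset

lemma aux_prod_pow_dvd (s : Finset ℕ) (e : ℕ → ℕ) (n : ℕ)
    (hs : ∀ p ∈ s, p.Prime) (h : ∀ p ∈ s, p ^ e p ∣ n) :
    (∏ p ∈ s, p ^ e p) ∣ n := by
  induction s using Finset.induction_on with
  | empty => simpa using one_dvd n
  | @insert p s hp ih =>
    rw [Finset.prod_insert hp]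
    have hpp := hs p (Finset.mem_insert_self p s)
    have hcop : Nat.Coprime (p ^ e p) (∏ q ∈ s, q ^ e q) := by
      apply Nat.Coprime.pow_left
      apply Nat.Coprime.prod_right
      intro q hq
      apply Nat.Coprime.pow_right
      exact (Nat.coprime_primes hpp (hs q (Finset.mem_insert_of_mem hq))).mpr
        (fun hEq => hp (hEq ▸ hq))
    exact hcop.mul_dvd_of_dvd_of_dvd (h p (Finset.mem_insert_self p s))
      (ih (fun q hq => hs q (Finset.mem_insert_of_mem hq))
          (fun q hq => h q (Finset.mem_insert_of_mem hq)))

lemma aux_pow_div_dvd_factorial {p N : ℕ} (hp : p.Prime) : p ^ (N / p) ∣ Nat.factorial N := by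
  rcases Nat.eq_zero_or_pos (N / p) with h | h
  · simp [h]
  · rw [Nat.Prime.pow_dvd_factorial_iff hp (Nat.lt_succ_self _)]
    have hpN : p ≤ N := by
      by_contra h'
      push_neg at h'
      rw [Nat.div_eq_of_lt h'] at h
      omega
    calc N / p = N / p ^ 1 := by rw [pow_one]
    _ ≤ ∑ i ∈ Finset.Ico 1 (Nat.log p N + 1), N / p ^ i := by
        apply Finset.single_le_sum (f := fun i => N / p ^ i) (fun i _ => Nat.zero_le _)
        simp only [Finset.mem_Ico]
        refine ⟨le_refl 1, ?_⟩
        have : 1 ≤ Nat.log p N := Nat.le_log_of_pow_le hp.one_lt (by simpa using hpN)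
        omega

lemma aux_theta (N : ℕ) :
    ∑ p ∈ N.primesBelow, Real.log p ≤ N * Real.log 4 := by
  have h2 : ∑ p ∈ N.primesBelow, Real.log p = Real.log (∏ p ∈ N.primesBelow, (p:ℝ)) := by
    rw [Real.log_prod]
    intro p hp
    exact_mod_cast (Nat.prime_of_mem_primesBelow hp).pos.ne'
  rw [h2]
  have h3 : (∏ p ∈ N.primesBelow, p) ≤ 4 ^ N := by
    calc (∏ p ∈ N.primesBelow, p) ≤ primorial N := by
          apply Finset.prod_le_prod_of_subset_of_one_le'
          · intro p hp
            rw [Nat.mem_primesBelow] at hp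
            simp only [primorial, Finset.mem_filter, Finset.mem_range]
            exact ⟨by omega, hp.2⟩
          · intro i hi _
            exact (Finset.mem_filter.mp hi).2.one_lt.le
    _ ≤ 4 ^ N := primorial_le_4_pow N
  have h4 : (∏ p ∈ N.primesBelow, (p:ℝ)) ≤ (4:ℝ) ^ N := by
    rw [← Nat.cast_prod]
    exact_mod_cast h3
  calc Real.log (∏ p ∈ N.primesBelow, (p:ℝ)) ≤ Real.log ((4:ℝ) ^ N) := by
        apply Real.log_le_log _ h4
        apply Finset.prod_pos
        intro p hp
        exact_mod_cast (Nat.prime_of_mem_primesBelow hp).pos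
  _ = N * Real.log 4 := by rw [Real.log_pow]

lemma aux_mertens1 {N : ℕ} (hN : 1 ≤ N) :
    ∑ p ∈ N.primesBelow, Real.log p / p ≤ Real.log N + Real.log 4 := by
  have hNR : (0:ℝ) < N := by exact_mod_cast hN
  have hdvd : (∏ p ∈ N.primesBelow, p ^ (N / p)) ∣ Nat.factorial N :=
    aux_prod_pow_dvd _ _ _ (fun p hp => Nat.prime_of_mem_primesBelow hp)
      (fun p hp => aux_pow_div_dvd_factorial (Nat.prime_of_mem_primesBelow hp))
  have hle : (∏ p ∈ N.primesBelow, p ^ (N / p)) ≤ Nat.factorial N :=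
    Nat.le_of_dvd (Nat.factorial_pos N) hdvd
  have hlogm : ∑ p ∈ N.primesBelow, ((N / p : ℕ) : ℝ) * Real.log p ≤ N * Real.log N := by
    have h1 : ∑ p ∈ N.primesBelow, ((N / p : ℕ) : ℝ) * Real.log p
        = Real.log (∏ p ∈ N.primesBelow, ((p:ℝ) ^ (N / p : ℕ))) := by
      rw [Real.log_prod]
      · exact Finset.sum_congr rfl fun p hp => (Real.log_pow _ _).symm
      · intro p hp
        have := (Nat.prime_of_mem_primesBelow hp).pos
        positivity
    rw [h1]
    have h2 : (∏ p ∈ N.primesBelow, ((p:ℝ) ^ (N / p : ℕ))) ≤ ((Nat.factorial N : ℕ) : ℝ) := by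
      simp only [← Nat.cast_pow]
      rw [← Nat.cast_prod]
      exact_mod_cast hle
    calc Real.log (∏ p ∈ N.primesBelow, ((p:ℝ) ^ (N / p : ℕ)))
        ≤ Real.log (Nat.factorial N) := by
          apply Real.log_le_log _ h2
          apply Finset.prod_pos
          intro p hp
          have := (Nat.prime_of_mem_primesBelow hp).pos
          positivity
    _ ≤ Real.log ((N:ℝ) ^ N) := by
          apply Real.log_le_log (by exact_mod_cast Nat.factorial_pos N)
          exact_mod_cast Nat.factorial_le_pow N
    _ = N * Real.log N := by rw [Real.log_pow]
  -- per-term comparison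
  have hterm : ∀ p ∈ N.primesBelow,
      (N:ℝ) * (Real.log p / p) ≤ ((N / p : ℕ) : ℝ) * Real.log p + Real.log p := by
    intro p hp
    have hpp := Nat.prime_of_mem_primesBelow hp
    have hp0 : (0:ℝ) < p := by exact_mod_cast hpp.pos
    have hlog0 : 0 ≤ Real.log p := Real.log_natCast_nonneg p
    have hdiv : (N:ℝ) / p ≤ ((N / p : ℕ) : ℝ) + 1 := by
      rw [div_le_iff₀ hp0]
      have hmod := Nat.div_add_mod N p
      have hr := Nat.mod_lt N hpp.pos
      have h1 : (N:ℝ) = p * ((N / p : ℕ) : ℝ) + ((N % p : ℕ) : ℝ) := by exact_mod_cast hmod.symm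
      have h2 : ((N % p : ℕ) : ℝ) < p := by exact_mod_cast hr
      nlinarith
    calc (N:ℝ) * (Real.log p / p) = ((N:ℝ) / p) * Real.log p := by ring
    _ ≤ (((N / p : ℕ) : ℝ) + 1) * Real.log p := by
        apply mul_le_mul_of_nonneg_right hdiv hlog0
    _ = ((N / p : ℕ) : ℝ) * Real.log p + Real.log p := by ring
  have hsum : (N:ℝ) * ∑ p ∈ N.primesBelow, Real.log p / p
      ≤ N * Real.log N + N * Real.log 4 := by
    rw [Finset.mul_sum]
    calc ∑ p ∈ N.primesBelow, (N:ℝ) * (Real.log p / p)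
        ≤ ∑ p ∈ N.primesBelow, (((N / p : ℕ) : ℝ) * Real.log p + Real.log p) :=
          Finset.sum_le_sum hterm
    _ = (∑ p ∈ N.primesBelow, ((N / p : ℕ) : ℝ) * Real.log p)
        + ∑ p ∈ N.primesBelow, Real.log p := Finset.sum_add_distrib
    _ ≤ N * Real.log N + N * Real.log 4 := add_le_add hlogm (aux_theta N)
  have := (mul_le_mul_iff_right₀ hNR).mp (by linarith [hsum] :
    (N:ℝ) * ∑ p ∈ N.primesBelow, Real.log p / p ≤ (N:ℝ) * (Real.log N + Real.log 4))
  exact this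

lemma aux_S1_mono {M N : ℕ} (h : M ≤ N) :
    ∑ p ∈ M.primesBelow, (1:ℝ) / p ≤ ∑ p ∈ N.primesBelow, (1:ℝ) / p := by
  apply Finset.sum_le_sum_of_subset_of_nonneg
  · intro p hp
    rw [Nat.mem_primesBelow] at hp ⊢
    exact ⟨hp.1.trans_le h, hp.2⟩
  · intro p _ _
    positivity

lemma aux_S1_dyadic : ∀ k N : ℕ, N ≤ 2 ^ (2 ^ k) →
    ∑ p ∈ N.primesBelow, (1:ℝ) / p ≤ 7 * (k + 1) := by
  intro k
  induction k with
  | zero =>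
    intro N hN
    have he : N.primesBelow = ∅ := by
      rw [Finset.eq_empty_iff_forall_notMem]
      intro p hp
      rw [Nat.mem_primesBelow] at hp
      have := hp.2.two_le
      have := hp.1
      omega
    rw [he]
    simp
  | succ k ih =>
    intro N hN
    by_cases hNM : N ≤ 2 ^ (2 ^ k)
    · refine le_trans (ih N hNM) (by push_cast; linarith)
    · push_neg at hNM
      set M := 2 ^ (2 ^ k) with hM
      have hM2 : (2:ℕ) ≤ M := by
        have : 1 ≤ 2 ^ k := Nat.one_le_two_pow
        calc (2:ℕ) = 2 ^ 1 := rfl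
        _ ≤ 2 ^ (2 ^ k) := Nat.pow_le_pow_right (by norm_num) this
      have hN1 : 1 ≤ N := by omega
      have hlogM : Real.log M = (2:ℝ) ^ k * Real.log 2 := by
        rw [hM]
        push_cast
        rw [Real.log_pow]
        push_cast
        ring
      have hlogM0 : 0 < Real.log M := by
        rw [hlogM]
        positivity
      -- split the sum
      have hsplit : ∑ p ∈ N.primesBelow, (1:ℝ) / p
          = (∑ p ∈ N.primesBelow with p < M, (1:ℝ) / p)
            + ∑ p ∈ N.primesBelow with ¬ p < M, (1:ℝ) / p :=
        (Finset.sum_filter_add_sum_filter_not _ _ _).symm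
      have h1 : (∑ p ∈ N.primesBelow with p < M, (1:ℝ) / p) ≤ 7 * (k + 1) := by
        refine le_trans ?_ (ih M le_rfl)
        apply Finset.sum_le_sum_of_subset_of_nonneg
        · intro p hp
          simp only [Finset.mem_filter, Nat.mem_primesBelow] at hp ⊢
          exact ⟨hp.2, hp.1.2⟩
        · intro p _ _
          positivity
      have h2 : (∑ p ∈ N.primesBelow with ¬ p < M, (1:ℝ) / p) ≤ 7 := by
        have hbound : ∀ p ∈ N.primesBelow.filter (fun p => ¬ p < M),
            (1:ℝ) / p ≤ (Real.log p / p) / Real.log M := by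
          intro p hp
          simp only [Finset.mem_filter, not_lt] at hp
          have hpp := Nat.prime_of_mem_primesBelow hp.1
          have hp0 : (0:ℝ) < p := by exact_mod_cast hpp.pos
          have hMp : Real.log M ≤ Real.log p := by
            apply Real.log_le_log (by exact_mod_cast (by omega : (0:ℕ) < M))
            exact_mod_cast hp.2
          rw [div_div, div_le_div_iff₀ hp0 (by positivity), one_mul]
          calc (p:ℝ) * Real.log M = Real.log M * p := by ring
          _ ≤ Real.log p * p := by
              apply mul_le_mul_of_nonneg_right hMp (le_of_lt hp0)
        calc (∑ p ∈ N.primesBelow with ¬ p < M, (1:ℝ) / p)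
            ≤ ∑ p ∈ N.primesBelow with ¬ p < M, (Real.log p / p) / Real.log M :=
              Finset.sum_le_sum hbound
        _ = (∑ p ∈ N.primesBelow with ¬ p < M, Real.log p / p) / Real.log M := by
              rw [Finset.sum_div]
        _ ≤ (∑ p ∈ N.primesBelow, Real.log p / p) / Real.log M := by
              rw [div_le_div_iff_of_pos_right hlogM0]
              refine Finset.sum_le_sum_of_subset_of_nonneg (Finset.filter_subset _ _) ?_
              intro p hp _
              have hpp := Nat.prime_of_mem_primesBelow hp
              have h2p : (2:ℝ) ≤ p := by exact_mod_cast hpp.two_le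
              have : 0 ≤ Real.log p := Real.log_nonneg (by linarith)
              positivity
        _ ≤ (Real.log N + Real.log 4) / Real.log M := by
              rw [div_le_div_iff_of_pos_right hlogM0]
              exact aux_mertens1 hN1
        _ ≤ 7 := by
              rw [div_le_iff₀ hlogM0, hlogM]
              have hlogN : Real.log N ≤ (2:ℝ) ^ (k+1) * Real.log 2 := by
                calc Real.log N ≤ Real.log ((2:ℝ) ^ (2 ^ (k+1))) := by
                      apply Real.log_le_log (by exact_mod_cast hN1)
                      exact_mod_cast hN
                _ = (2:ℝ) ^ (k+1) * Real.log 2 := by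
                      rw [Real.log_pow]; push_cast; ring
              have hlog4 : Real.log 4 = 2 * Real.log 2 := by
                rw [show (4:ℝ) = 2 ^ 2 by norm_num, Real.log_pow]
                push_cast; ring
              have hl2 : 0 < Real.log 2 := Real.log_pos (by norm_num)
              have h2k : (1:ℝ) ≤ 2 ^ k := one_le_pow₀ (by norm_num)
              rw [hlog4]
              have : (2:ℝ) ^ (k+1) = 2 * 2 ^ k := by ring
              nlinarith
      rw [hsplit]
      push_cast
      linarith

lemma aux_mertens2 {N : ℕ} (hN : 3 ≤ N) :
    ∑ p ∈ N.primesBelow, (1:ℝ) / p ≤ 20 * Real.log (Real.log N) + 30 := by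
  set L2 := Nat.log 2 N with hL2
  have hL21 : 1 ≤ L2 := by
    exact Nat.log_pos (by norm_num) (by omega)
  set a := Nat.log 2 L2 with ha
  -- N ≤ 2 ^ 2 ^ (a+1)
  have hNk : N ≤ 2 ^ 2 ^ (a + 1) := by
    have h1 : N < 2 ^ (L2 + 1) := Nat.lt_pow_succ_log_self (by norm_num) N
    have h2 : L2 < 2 ^ (a + 1) := Nat.lt_pow_succ_log_self (by norm_num) L2
    have := Nat.pow_le_pow_right (show 0 < 2 by norm_num) (show L2 + 1 ≤ 2 ^ (a+1) by omega)
    omega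
  have hS1 := aux_S1_dyadic (a + 1) N hNk
  -- real facts
  set l2 := Real.log 2 with hl2
  set LN := Real.log N with hLN
  set LLN := Real.log LN with hLLN
  have hl2a : 0.6931 < l2 := by
    have := Real.log_two_gt_d9; linarith
  have hl2b : l2 < 0.6932 := by
    have := Real.log_two_lt_d9; linarith
  have hLN1 : 1 < LN := by
    rw [hLN, ← Real.log_exp 1]
    apply Real.log_lt_log (Real.exp_pos 1)
    calc Real.exp 1 < 2.7182818286 := Real.exp_one_lt_d9
    _ ≤ (N:ℝ) := by
        have : (3:ℝ) ≤ N := by exact_mod_cast hN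
        linarith
  have hLLN0 : 0 < LLN := Real.log_pos hLN1
  have hb1 : (1:ℝ) ≤ (L2:ℝ) := by exact_mod_cast hL21
  have hbl2 : (L2:ℝ) * l2 ≤ LN := by
    have h := Nat.pow_log_le_self 2 (show N ≠ 0 by omega)
    have : ((2:ℕ) ^ L2 : ℝ) ≤ (N:ℝ) := by exact_mod_cast h
    calc (L2:ℝ) * l2 = Real.log ((2:ℝ) ^ L2) := by rw [Real.log_pow]
    _ ≤ LN := Real.log_le_log (by positivity) (by exact_mod_cast this)
  have hal2 : (a:ℝ) * l2 ≤ Real.log L2 := by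
    have h := Nat.pow_log_le_self 2 (show L2 ≠ 0 by omega)
    have : ((2:ℕ) ^ a : ℝ) ≤ (L2:ℝ) := by exact_mod_cast h
    calc (a:ℝ) * l2 = Real.log ((2:ℝ) ^ a) := by rw [Real.log_pow]
    _ ≤ Real.log L2 := Real.log_le_log (by positivity) (by exact_mod_cast this)
  have hlogb : Real.log L2 ≤ l2 + LLN := by
    have hb2LN : (L2:ℝ) ≤ 2 * LN := by
      nlinarith
    calc Real.log L2 ≤ Real.log (2 * LN) := Real.log_le_log (by linarith) hb2LN
    _ = l2 + LLN := by rw [Real.log_mul (by norm_num) (by linarith)]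
  -- conclude
  have hak : (a:ℝ) ≤ 1 + 2 * LLN := by nlinarith
  have : ((a:ℕ) + 1 + 1 : ℝ) ≤ 2 * LLN + 3 := by push_cast; linarith
  calc ∑ p ∈ N.primesBelow, (1:ℝ) / p ≤ 7 * ((a + 1 : ℕ) + 1) := hS1
  _ ≤ 7 * (2 * LLN + 3) := by
      push_cast
      push_cast at this
      linarith
  _ ≤ 20 * LLN + 30 := by linarith

/-- The completely multiplicative function `n ↦ n ^ (-σ)`. -/
noncomputable def rpowHom (σ : ℝ) : ℕ →* ℝ where
  toFun n := (n:ℝ) ^ (-σ)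
  map_one' := by simp
  map_mul' m n := by push_cast; exact Real.mul_rpow (Nat.cast_nonneg m) (Nat.cast_nonneg n)

@[simp] lemma rpowHom_apply (σ : ℝ) (n : ℕ) : rpowHom σ n = (n:ℝ) ^ (-σ) := rfl

set_option maxHeartbeats 2000000 in
/-- With `y = exp(log x / log log x)`, the number `Ψ(x, y)` of positive integers `n ≤ x`
all of whose prime factors are `≤ y` satisfies `Ψ(x, y) = O(x/(log x)^A)` for every
`A > 0`. -/
theorem smooth_numbers_count_negligible (A : ℝ) (hA : 0 < A) :
    (fun x : ℝ =>
        (((Finset.Icc 1 ⌊x⌋₊).filter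
            (fun n : ℕ => ∀ p ∈ n.primeFactors,
              (p : ℝ) ≤ Real.exp (Real.log x / Real.log (Real.log x)))).card : ℝ))
      =O[atTop] (fun x : ℝ => x / Real.log x ^ A) := by
  set A' := A + 80 with hA'def
  have hA'0 : 0 < A' := by linarith
  rw [Asymptotics.isBigO_iff]
  refine ⟨Real.exp (200 + 8 * A' * Real.exp A'), ?_⟩
  -- the ratio log log x / log x tends to 0
  have hLL0 : Tendsto (fun x : ℝ => Real.log (Real.log x) / Real.log x) atTop (nhds 0) := by
    have h1 : Tendsto (fun t : ℝ => Real.log t / t) atTop (nhds 0) :=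
      Real.isLittleO_log_id_atTop.tendsto_div_nhds_zero
    exact h1.comp Real.tendsto_log_atTop
  have hε : (0:ℝ) < min (1 / (2 * A')) (1 / 16) := by positivity
  have E1 : ∀ᶠ x : ℝ in atTop,
      Real.log (Real.log x) / Real.log x < min (1 / (2 * A')) (1 / 16) :=
    hLL0.eventually (gt_mem_nhds hε)
  have E2 : ∀ᶠ x : ℝ in atTop, 3 ≤ Real.log (Real.log x) := by
    have := (Real.tendsto_log_atTop.comp Real.tendsto_log_atTop).eventually_ge_atTop 3
    simpa [Function.comp] using this
  filter_upwards [E1, E2, eventually_ge_atTop (3:ℝ)] with x h1 h2 h3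
  -- notation
  set L := Real.log x with hLdef
  set LL := Real.log L with hLLdef
  have hx0 : (0:ℝ) < x := by linarith
  have hL1 : 1 < L := by
    rw [hLdef, ← Real.log_exp 1]
    apply Real.log_lt_log (Real.exp_pos 1)
    calc Real.exp 1 < 2.7182818286 := Real.exp_one_lt_d9
    _ ≤ x := by linarith
  have hL0 : (0:ℝ) < L := by linarith
  have hLL3 : 3 ≤ LL := h2
  have hLL0' : (0:ℝ) < LL := by linarith
  set ly := L / LL with hlydef
  have hly0 : 0 < ly := by positivity
  have hly16 : 16 ≤ ly := by
    have hlt : LL / L < 1 / 16 := lt_of_lt_of_le h1 (min_le_right _ _)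
    rw [hlydef, le_div_iff₀ hLL0']
    rw [div_lt_div_iff₀ hL0 (by norm_num)] at hlt
    linarith
  set y := Real.exp ly with hydef
  have hy1 : (1:ℝ) ≤ y := by
    rw [hydef, ← Real.exp_zero]
    exact Real.exp_le_exp.mpr (by linarith)
  have hy16 : (16:ℝ) ≤ y := by
    calc (16:ℝ) ≤ ly + 1 := by linarith
    _ ≤ Real.exp ly := Real.add_one_le_exp ly
  set N := ⌊y⌋₊ + 1 with hNdef
  have hN3 : 3 ≤ N := by
    have : (16:ℕ) ≤ ⌊y⌋₊ := Nat.le_floor (by exact_mod_cast hy16)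
    omega
  have hyN : y < N := by
    rw [hNdef]
    push_cast
    exact Nat.lt_floor_add_one y
  have hNy : (N:ℝ) ≤ y + 1 := by
    rw [hNdef]
    push_cast
    have := Nat.floor_le (by positivity : (0:ℝ) ≤ y)
    linarith
  have hlogy : Real.log y = ly := Real.log_exp ly
  have hlogN_lb : ly ≤ Real.log N := by
    rw [← hlogy]
    exact Real.log_le_log (by positivity) hyN.le
  have hlogN_ub : Real.log N ≤ ly + 1 := by
    calc Real.log N ≤ Real.log (2 * y) := by
          apply Real.log_le_log (by positivity)
          linarith
    _ = Real.log 2 + ly := by rw [Real.log_mul (by norm_num) (by positivity), hlogy]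
    _ ≤ ly + 1 := by
          have := Real.log_two_lt_d9
          linarith
  -- the exponent σ
  set σ := 1 - A' * (LL / L) with hσdef
  have hσhalf : 1/2 ≤ σ := by
    have hlt : LL / L < 1 / (2 * A') := lt_of_lt_of_le h1 (min_le_left _ _)
    have : A' * (LL / L) ≤ A' * (1 / (2 * A')) := by
      apply mul_le_mul_of_nonneg_left hlt.le hA'0.le
    have heq : A' * (1 / (2 * A')) = 1/2 := by field_simp
    rw [hσdef]
    rw [heq] at this
    linarith
  have hσ1 : σ < 1 := by
    rw [hσdef]
    have : 0 < A' * (LL / L) := by positivity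
    linarith
  have hσ0 : 0 < σ := lt_of_lt_of_le one_half_pos hσhalf
  have h1σ : 1 - σ = A' / ly := by
    rw [hσdef, hlydef]
    field_simp
    ring
  -- the Euler product bound
  have hlt1 : ∀ {p : ℕ}, p.Prime → ‖rpowHom σ p‖ < 1 := by
    intro p hp
    rw [rpowHom_apply, Real.norm_of_nonneg (Real.rpow_nonneg (Nat.cast_nonneg p) _)]
    exact Real.rpow_lt_one_of_one_lt_of_neg (by exact_mod_cast hp.one_lt) (by linarith)
  have hHasSum := (EulerProduct.summable_and_hasSum_smoothNumbers_prod_primesBelow_geometric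
    hlt1 N).2
  have hind := (hasSum_subtype_iff_indicator).mp hHasSum
  set S := (Finset.Icc 1 ⌊x⌋₊).filter
      (fun n : ℕ => ∀ p ∈ n.primeFactors, (p : ℝ) ≤ Real.exp (L / LL)) with hSdef
  have hsub : ∀ n ∈ S, n ∈ N.smoothNumbers := by
    intro n hn
    rw [hSdef, Finset.mem_filter, Finset.mem_Icc] at hn
    have hn0 : n ≠ 0 := by omega
    rw [Nat.mem_smoothNumbers']
    intro p pp pdvd
    have hpf : p ∈ n.primeFactors := Nat.mem_primeFactors.mpr ⟨pp, pdvd, hn0⟩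
    have := hn.2 p hpf
    have hpy : (p:ℝ) ≤ y := by rw [hydef, hlydef]; exact this
    have : (p:ℝ) < N := lt_of_le_of_lt hpy hyN
    exact_mod_cast this
  -- Step 1 : card ≤ x^σ * ∑ n in S, n^(-σ)
  have step1 : (S.card : ℝ) ≤ x ^ σ * ∑ n ∈ S, (n:ℝ) ^ (-σ) := by
    have hcard : (S.card : ℝ) = ∑ _n ∈ S, (1:ℝ) := by simp
    rw [hcard, Finset.mul_sum]
    apply Finset.sum_le_sum
    intro n hn
    rw [hSdef, Finset.mem_filter, Finset.mem_Icc] at hn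
    have hn1 : (1:ℝ) ≤ n := by exact_mod_cast hn.1.1
    have hnx : (n:ℝ) ≤ x := by
      calc (n:ℝ) ≤ ⌊x⌋₊ := by exact_mod_cast hn.1.2
      _ ≤ x := Nat.floor_le hx0.le
    have hdiv1 : (1:ℝ) ≤ x / n := by
      rw [le_div_iff₀ (by linarith)]
      linarith
    calc (1:ℝ) = 1 ^ σ := (Real.one_rpow σ).symm
    _ ≤ (x / n) ^ σ := Real.rpow_le_rpow (by norm_num) hdiv1 hσ0.le
    _ = x ^ σ / (n:ℝ) ^ σ := Real.div_rpow hx0.le (Nat.cast_nonneg n) σ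
    _ = x ^ σ * (n:ℝ) ^ (-σ) := by
        rw [Real.rpow_neg (Nat.cast_nonneg n)]
        ring
  -- Step 2 : the sum over S is at most the full Euler product
  have step2 : ∑ n ∈ S, (n:ℝ) ^ (-σ) ≤ ∏ p ∈ N.primesBelow, (1 - (p:ℝ) ^ (-σ))⁻¹ := by
    have hP : ∏ p ∈ N.primesBelow, (1 - (rpowHom σ) p)⁻¹
        = ∏ p ∈ N.primesBelow, (1 - (p:ℝ) ^ (-σ))⁻¹ := by
      refine Finset.prod_congr rfl fun p _ => ?_
      rw [rpowHom_apply]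
    have h1 : ∑ n ∈ S, (n:ℝ) ^ (-σ)
        = ∑ n ∈ S, Set.indicator (Nat.smoothNumbers N) (rpowHom σ) n := by
      refine Finset.sum_congr rfl fun n hn => ?_
      rw [Set.indicator_of_mem (hsub n hn), rpowHom_apply]
    rw [h1, ← hP]
    refine le_trans (Summable.sum_le_tsum S (fun i _ => ?_) hind.summable) hind.tsum_eq.le
    exact Set.indicator_nonneg (fun j _ => Real.rpow_nonneg (Nat.cast_nonneg j) _) i
  -- Step 3 : Euler product ≤ exp (4 * ∑ p^(-σ))
  have hpfacts : ∀ p ∈ N.primesBelow, (2:ℝ) ≤ p ∧ 0 ≤ (p:ℝ) ^ (-σ) ∧ (p:ℝ) ^ (-σ) ≤ 3/4 := by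
    intro p hp
    have hpp := Nat.prime_of_mem_primesBelow hp
    have hp2 : (2:ℝ) ≤ p := by exact_mod_cast hpp.two_le
    have hp0 : (0:ℝ) < p := by linarith
    refine ⟨hp2, Real.rpow_nonneg (Nat.cast_nonneg p) _, ?_⟩
    have e1 : (p:ℝ) ^ (-σ) ≤ (2:ℝ) ^ (-σ) := by
      rw [Real.rpow_neg hp0.le, Real.rpow_neg (by norm_num)]
      apply inv_anti₀ (Real.rpow_pos_of_pos (by norm_num) σ)
      exact Real.rpow_le_rpow (by norm_num) hp2 hσ0.le
    have e2 : (2:ℝ) ^ (-σ) ≤ (2:ℝ) ^ (-(1/2 : ℝ)) :=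
      Real.rpow_le_rpow_of_exponent_le (by norm_num) (by linarith)
    have e3 : (2:ℝ) ^ (-(1/2 : ℝ)) ≤ 3/4 := by
      rw [Real.rpow_neg (by norm_num), ← Real.sqrt_eq_rpow]
      have hss : Real.sqrt 2 * Real.sqrt 2 = 2 := Real.mul_self_sqrt (by norm_num)
      have hs43 : (4:ℝ)/3 ≤ Real.sqrt 2 := by nlinarith [Real.sqrt_nonneg 2]
      calc (Real.sqrt 2)⁻¹ ≤ ((4:ℝ)/3)⁻¹ := by
            apply inv_anti₀ (by norm_num) hs43
      _ = 3/4 := by norm_num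
    linarith
  have step3 : ∏ p ∈ N.primesBelow, (1 - (p:ℝ) ^ (-σ))⁻¹
      ≤ Real.exp (4 * ∑ p ∈ N.primesBelow, (p:ℝ) ^ (-σ)) := by
    rw [Finset.mul_sum, Real.exp_sum]
    apply Finset.prod_le_prod
    · intro p hp
      obtain ⟨hp2, ht0, ht34⟩ := hpfacts p hp
      have : 0 < 1 - (p:ℝ) ^ (-σ) := by linarith
      positivity
    · intro p hp
      obtain ⟨hp2, ht0, ht34⟩ := hpfacts p hp
      set t := (p:ℝ) ^ (-σ)
      have h1t : 0 < 1 - t := by linarith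
      rw [inv_le_iff_one_le_mul₀ h1t]
      nlinarith [Real.add_one_le_exp (4 * t)]
  -- Step 4 : bound ∑ p^(-σ)
  have step4 : ∑ p ∈ N.primesBelow, (p:ℝ) ^ (-σ)
      ≤ (∑ p ∈ N.primesBelow, (1:ℝ) / p)
        + (A' * Real.exp A' / ly) * ∑ p ∈ N.primesBelow, Real.log p / p := by
    rw [Finset.mul_sum, ← Finset.sum_add_distrib]
    apply Finset.sum_le_sum
    intro p hp
    have hpp := Nat.prime_of_mem_primesBelow hp
    have hp2 : (2:ℝ) ≤ p := by exact_mod_cast hpp.two_le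
    have hp0 : (0:ℝ) < p := by linarith
    have hpy : (p:ℝ) ≤ y := by
      have hpfl : p ≤ ⌊y⌋₊ := by
        have := Nat.lt_of_mem_primesBelow hp
        omega
      calc (p:ℝ) ≤ ⌊y⌋₊ := by exact_mod_cast hpfl
      _ ≤ y := Nat.floor_le (by positivity)
    have hlogp0 : 0 ≤ Real.log p := Real.log_nonneg (by linarith)
    have hlogpy : Real.log p ≤ ly := by
      rw [← hlogy]
      exact Real.log_le_log hp0 hpy
    set s := (A' / ly) * Real.log p with hsdef
    have hs0 : 0 ≤ s := by positivity
    have hsA : s ≤ A' := by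
      rw [hsdef]
      calc (A' / ly) * Real.log p ≤ (A' / ly) * ly := by
            apply mul_le_mul_of_nonneg_left hlogpy (by positivity)
      _ = A' := by field_simp
    have hkey : (p:ℝ) ^ (-σ) = Real.exp s / p := by
      rw [Real.rpow_def_of_pos hp0]
      have hexp : Real.log p * (-σ) = s + (- Real.log p) := by
        rw [hsdef]
        have : (1 - σ) = A' / ly := h1σ
        nlinarith [this]
      rw [hexp, Real.exp_add, Real.exp_neg, Real.exp_log hp0]
      ring
    have hexps : Real.exp s ≤ 1 + s * Real.exp A' := by
      have hm := Real.add_one_le_exp (-s)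
      have hprod : Real.exp (-s) * Real.exp s = 1 := by
        rw [← Real.exp_add]; simp
      have h1 : Real.exp s - 1 ≤ s * Real.exp s := by nlinarith [Real.exp_pos s]
      have h2 : s * Real.exp s ≤ s * Real.exp A' :=
        mul_le_mul_of_nonneg_left (Real.exp_le_exp.mpr hsA) hs0
      linarith
    rw [hkey]
    calc Real.exp s / p ≤ (1 + s * Real.exp A') / p := by
          exact (div_le_div_iff_of_pos_right hp0).mpr hexps
    _ = 1 / p + (A' * Real.exp A' / ly) * (Real.log p / p) := by
        rw [hsdef]
        field_simp
  -- Step 5 : numeric bounds on the prime sums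
  have hlog4 : Real.log 4 ≤ 2 := by
    have h42 : Real.log 4 = 2 * Real.log 2 := by
      rw [show (4:ℝ) = 2^2 by norm_num, Real.log_pow]
      push_cast; ring
    have := Real.log_two_lt_d9
    rw [h42]; linarith
  have hloglogN : Real.log (Real.log N) ≤ LL + 1 := by
    have hlogN2ly : Real.log N ≤ 2 * ly := by linarith
    have hlogly : Real.log ly ≤ LL := by
      rw [hLLdef]
      apply Real.log_le_log hly0
      rw [hlydef, div_le_iff₀ hLL0']
      nlinarith
    calc Real.log (Real.log N) ≤ Real.log (2 * ly) := by
          apply Real.log_le_log (by linarith) hlogN2ly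
    _ = Real.log 2 + Real.log ly := Real.log_mul (by norm_num) (by positivity)
    _ ≤ LL + 1 := by
        have := Real.log_two_lt_d9
        linarith
  have hsum1 : ∑ p ∈ N.primesBelow, (1:ℝ) / p ≤ 20 * LL + 50 := by
    have := aux_mertens2 hN3
    nlinarith
  have hsumlog : ∑ p ∈ N.primesBelow, Real.log p / p ≤ 2 * ly := by
    have := aux_mertens1 (show 1 ≤ N by omega)
    linarith
  have hsumlog0 : 0 ≤ ∑ p ∈ N.primesBelow, Real.log p / p := by
    apply Finset.sum_nonneg
    intro p hp
    have hpp := Nat.prime_of_mem_primesBelow hp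
    have hp2 : (2:ℝ) ≤ p := by exact_mod_cast hpp.two_le
    have : 0 ≤ Real.log p := Real.log_nonneg (by linarith)
    positivity
  have hterm2 : (A' * Real.exp A' / ly) * ∑ p ∈ N.primesBelow, Real.log p / p
      ≤ 2 * (A' * Real.exp A') := by
    have hc0 : 0 ≤ A' * Real.exp A' / ly := by positivity
    calc (A' * Real.exp A' / ly) * ∑ p ∈ N.primesBelow, Real.log p / p
        ≤ (A' * Real.exp A' / ly) * (2 * ly) := mul_le_mul_of_nonneg_left hsumlog hc0
    _ = 2 * (A' * Real.exp A') := by field_simp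
  have hsumσ : ∑ p ∈ N.primesBelow, (p:ℝ) ^ (-σ)
      ≤ 20 * LL + 50 + 2 * (A' * Real.exp A') := by
    calc ∑ p ∈ N.primesBelow, (p:ℝ) ^ (-σ)
        ≤ (∑ p ∈ N.primesBelow, (1:ℝ) / p)
          + (A' * Real.exp A' / ly) * ∑ p ∈ N.primesBelow, Real.log p / p := step4
    _ ≤ (20 * LL + 50) + 2 * (A' * Real.exp A') := add_le_add hsum1 hterm2
  -- Put everything together
  have hfinal : (S.card : ℝ)
      ≤ Real.exp (200 + 8 * A' * Real.exp A') * (x / L ^ A) := by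
    have hxσ0 : 0 ≤ x ^ σ := Real.rpow_nonneg hx0.le σ
    have hchain : (S.card : ℝ) ≤ x ^ σ * Real.exp (80 * LL + (200 + 8 * A' * Real.exp A')) := by
      calc (S.card : ℝ) ≤ x ^ σ * ∑ n ∈ S, (n:ℝ) ^ (-σ) := step1
      _ ≤ x ^ σ * ∏ p ∈ N.primesBelow, (1 - (p:ℝ) ^ (-σ))⁻¹ :=
          mul_le_mul_of_nonneg_left step2 hxσ0
      _ ≤ x ^ σ * Real.exp (4 * ∑ p ∈ N.primesBelow, (p:ℝ) ^ (-σ)) :=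
          mul_le_mul_of_nonneg_left step3 hxσ0
      _ ≤ x ^ σ * Real.exp (80 * LL + (200 + 8 * A' * Real.exp A')) := by
          apply mul_le_mul_of_nonneg_left _ hxσ0
          apply Real.exp_le_exp.mpr
          linarith
    have hxσ : x ^ σ = Real.exp (L - A' * LL) := by
      rw [Real.rpow_def_of_pos hx0, ← hLdef, hσdef]
      congr 1
      field_simp
    have hLA' : (L:ℝ) ^ (A:ℝ) = Real.exp (A * LL) := by
      rw [Real.rpow_def_of_pos hL0, ← hLLdef]
      ring_nf
    calc (S.card : ℝ) ≤ x ^ σ * Real.exp (80 * LL + (200 + 8 * A' * Real.exp A')) := hchain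
    _ = Real.exp (200 + 8 * A' * Real.exp A') * (x / L ^ A) := by
        rw [hxσ, ← Real.exp_add]
        rw [div_eq_mul_inv, ← Real.exp_log hx0, ← hLdef]
        rw [hLA', ← Real.exp_neg, ← Real.exp_add, ← Real.exp_add]
        congr 1
        rw [hA'def]
        ring
  -- finish
  have hrhs0 : 0 ≤ x / L ^ A := by
    have : (0:ℝ) < L ^ A := Real.rpow_pos_of_pos hL0 A
    positivity
  calc ‖(S.card : ℝ)‖ = (S.card : ℝ) := Real.norm_of_nonneg (Nat.cast_nonneg _)
  _ ≤ Real.exp (200 + 8 * A' * Real.exp A') * (x / L ^ A) := hfinal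
  _ = Real.exp (200 + 8 * A' * Real.exp A') * ‖x / L ^ A‖ := by
      rw [Real.norm_of_nonneg hrhs0]
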